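/- Let X = WH with W ∈ ℝ_+^{m×r}, H ∈ ℝ_+^{r×n}, r = rank(X), columns of H in the simplex, and H sufficiently scattered (SSC1 and SSC2). If (WQ^{-1}, QH) is another feasible factorization (WQ^{-1} ≥ 0, QH column-stochastic nonnegative) with det(QH(QH)^T) = det(HH^T), then Q is a permutation matrix. -/

import Mathlib

open Matrix

/-- Conic hull of the columns of a matrix `M`. -/
def coneOf {r n : ℕ} (M : Matrix (Fin r) (Fin n) ℝ) : Set (Fin r → ℝ) :=
  {y | ∃ c : Fin n → ℝ, (∀ j, 0 ≤ c j) ∧ y = M.mulVec c}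

/-- `Q` is a permutation matrix. -/
def IsPermMatrix {r : ℕ} (Q : Matrix (Fin r) (Fin r) ℝ) : Prop :=
  ∃ σ : Equiv.Perm (Fin r), ∀ i j, Q i j = if σ j = i then 1 else 0

/-- Equality case for the inequality `log x ≤ x - 1` summed over a finite set. -/
lemma amgm_aux {ι : Type*} (s : Finset ι) (f : ι → ℝ) (hpos : ∀ i ∈ s, 0 < f i)
    (hsum : ∑ i ∈ s, f i = s.card) (hprod : (1:ℝ) ≤ ∏ i ∈ s, f i) :
    ∀ i ∈ s, f i = 1 := by
  have hlog : ∑ i ∈ s, Real.log (f i) = Real.log (∏ i ∈ s, f i) :=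
    (Real.log_prod (fun i hi => (hpos i hi).ne')).symm
  have h0 : 0 ≤ ∑ i ∈ s, Real.log (f i) := by
    rw [hlog]; exact Real.log_nonneg hprod
  have hle : ∀ i ∈ s, Real.log (f i) ≤ f i - 1 :=
    fun i hi => Real.log_le_sub_one_of_pos (hpos i hi)
  have hsum2 : ∑ i ∈ s, (f i - 1) = 0 := by
    rw [Finset.sum_sub_distrib, hsum]; simp
  have heq : ∀ i ∈ s, Real.log (f i) = f i - 1 :=
    (Finset.sum_eq_sum_iff_of_le hle).1 (le_antisymm (Finset.sum_le_sum hle)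
      (by rw [hsum2]; exact h0))
  intro i hi
  by_contra hne
  exact absurd (heq i hi) (ne_of_lt (Real.log_lt_sub_one_of_pos (hpos i hi) hne))

/-- AM-GM: product is at most 1 when the sum equals the cardinality. -/
lemma prod_le_one_aux {ι : Type*} (s : Finset ι) (f : ι → ℝ) (hpos : ∀ i ∈ s, 0 < f i)
    (hsum : ∑ i ∈ s, f i = s.card) : ∏ i ∈ s, f i ≤ 1 := by
  by_contra h
  push_neg at h
  have hlog : Real.log (∏ i ∈ s, f i) = ∑ i ∈ s, Real.log (f i) :=
    Real.log_prod (fun i hi => (hpos i hi).ne')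
  have h1 : 0 < Real.log (∏ i ∈ s, f i) := Real.log_pos h
  have h2 : ∑ i ∈ s, Real.log (f i) ≤ ∑ i ∈ s, (f i - 1) :=
    Finset.sum_le_sum fun i hi => Real.log_le_sub_one_of_pos (hpos i hi)
  have h3 : ∑ i ∈ s, (f i - 1) = 0 := by rw [Finset.sum_sub_distrib, hsum]; simp
  rw [hlog] at h1; linarith

/-- Trace of a real symmetric matrix is the sum of its eigenvalues. -/
lemma trace_eq_sum_eig {r : ℕ} {A : Matrix (Fin r) (Fin r) ℝ} (hA : A.IsHermitian) :
    A.trace = ∑ i, hA.eigenvalues i := by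
  conv_lhs => rw [hA.spectral_theorem]
  rw [Unitary.conjStarAlgAut_apply, trace_mul_cycle]
  have h1 : (star (hA.eigenvectorUnitary : Matrix (Fin r) (Fin r) ℝ)) *
      (hA.eigenvectorUnitary : Matrix (Fin r) (Fin r) ℝ) = 1 := by
    simpa using (hA.eigenvectorUnitary.2).1
  rw [h1, one_mul, trace_diagonal]
  simp

/-- A real symmetric matrix all of whose eigenvalues are 1 is the identity. -/
lemma eq_one_of_eig_one {r : ℕ} {A : Matrix (Fin r) (Fin r) ℝ} (hA : A.IsHermitian)
    (h : ∀ i, hA.eigenvalues i = 1) : A = 1 := by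
  have hd : diagonal (RCLike.ofReal ∘ hA.eigenvalues) = (1 : Matrix (Fin r) (Fin r) ℝ) := by
    have : (RCLike.ofReal ∘ hA.eigenvalues : Fin r → ℝ) = fun _ => 1 := by
      funext i; simp [h i]
    rw [this, diagonal_one]
  conv_lhs => rw [hA.spectral_theorem, hd]
  rw [Unitary.conjStarAlgAut_apply, mul_one]
  simpa using (hA.eigenvectorUnitary.2).2

/-- Determinant of a real symmetric matrix is the product of its eigenvalues. -/
lemma det_eq_prod_eig {r : ℕ} {A : Matrix (Fin r) (Fin r) ℝ} (hA : A.IsHermitian) :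
    A.det = ∏ i, hA.eigenvalues i := by
  simpa using hA.det_eq_prod_eigenvalues

/-- A matrix with nonnegative square row-sum-bounds and orthogonality data:
if `Q.det ^ 2 = 1`, each row satisfies `‖row‖ ≤ rowsum`, and total sum is `r`,
then `Q * Qᵀ = 1`. -/
lemma orth_of_rows {r : ℕ} (Q : Matrix (Fin r) (Fin r) ℝ)
    (hdet2 : Q.det ^ 2 = 1)
    (hts : ∀ i, Real.sqrt (∑ j, (Q i j) ^ 2) ≤ ∑ j, Q i j)
    (hsums : ∑ i, ∑ j, Q i j = (r : ℝ)) :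
    Q * Qᵀ = 1 := by
  classical
  set G : Matrix (Fin r) (Fin r) ℝ := Q * Qᵀ with hG
  have hQt : Qᵀ = Qᴴ := (conjTranspose_eq_transpose_of_trivial Q).symm
  have hGpsd : G.PosSemidef := by rw [hG, hQt]; exact posSemidef_self_mul_conjTranspose Q
  have hGherm : G.IsHermitian := hGpsd.1
  have hGdiag : ∀ i, G i i = ∑ j, (Q i j) ^ 2 := by
    intro i; simp [hG, mul_apply, sq]
  have hGdet : G.det = 1 := by
    rw [hG, det_mul, det_transpose, ← sq, hdet2]
  have hgpos : ∀ i, 0 < G i i := by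
    intro i
    rcases (Finset.sum_nonneg fun j _ => sq_nonneg (Q i j)).lt_or_eq with h | h
    · rw [hGdiag i]; exact h
    · exfalso
      have hrow : ∀ j, Q i j = 0 := by
        intro j
        have := (Finset.sum_eq_zero_iff_of_nonneg (fun j _ => sq_nonneg (Q i j))).mp h.symm
        exact pow_eq_zero_iff (n := 2) (by norm_num) |>.mp (this j (Finset.mem_univ j))
      have : Q.det = 0 := det_eq_zero_of_row_eq_zero i hrow
      rw [this] at hdet2; norm_num at hdet2
  set d : Fin r → ℝ := fun i => Real.sqrt (G i i) with hd
  have hdpos : ∀ i, 0 < d i := fun i => Real.sqrt_pos.mpr (hgpos i)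
  have hd2 : ∀ i, d i ^ 2 = G i i := fun i => Real.sq_sqrt (hgpos i).le
  set P : Matrix (Fin r) (Fin r) ℝ := diagonal (fun i => (d i)⁻¹) * Q with hP
  set M : Matrix (Fin r) (Fin r) ℝ := P * Pᵀ with hM
  have hPapp : ∀ i j, P i j = (d i)⁻¹ * Q i j := by
    intro i j; simp [hP, diagonal_mul]
  have hMpsd : M.PosSemidef := by
    rw [hM, (conjTranspose_eq_transpose_of_trivial P).symm]
    exact posSemidef_self_mul_conjTranspose P
  have hMherm : M.IsHermitian := hMpsd.1
  have hMdiag : ∀ i, M i i = 1 := by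
    intro i
    have h1 : M i i = (d i)⁻¹ ^ 2 * (∑ j, (Q i j) ^ 2) := by
      simp only [hM, mul_apply, transpose_apply, hPapp, Finset.mul_sum]
      apply Finset.sum_congr rfl
      intro j _
      ring
    rw [h1, ← hGdiag i, ← hd2 i, ← mul_pow, inv_mul_cancel₀ (hdpos i).ne', one_pow]
  have hMtrace : M.trace = (r : ℝ) := by
    rw [trace]
    simp [diag, hMdiag]
  have hMdet : M.det = (∏ i, d i)⁻¹ ^ 2 := by
    rw [hM, det_mul, det_transpose, ← sq, hP, det_mul, det_diagonal]
    rw [mul_pow, hdet2, mul_one]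
    rw [← Finset.prod_inv_distrib]
  have hEigSum : ∑ i, hMherm.eigenvalues i = (r : ℝ) := by
    rw [← trace_eq_sum_eig hMherm, hMtrace]
  have hEigProd : ∏ i, hMherm.eigenvalues i = M.det := (det_eq_prod_eig hMherm).symm
  have hMdetpos : 0 < M.det := by
    rw [hMdet]
    exact pow_pos (inv_pos.mpr (Finset.prod_pos fun i _ => hdpos i)) 2
  have hEigPos : ∀ i, 0 < hMherm.eigenvalues i := by
    intro i
    rcases (hMpsd.eigenvalues_nonneg i).lt_or_eq with h | h
    · exact h
    · exfalso
      have : ∏ j, hMherm.eigenvalues j = 0 :=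
        Finset.prod_eq_zero (Finset.mem_univ i) h.symm
      rw [hEigProd] at this; linarith
  have hMdetle : M.det ≤ 1 := by
    rw [← hEigProd]
    apply prod_le_one_aux _ _ (fun i _ => hEigPos i)
    simpa using hEigSum
  have hprodd : (1:ℝ) ≤ ∏ i, d i := by
    have hpd : 0 < ∏ i, d i := Finset.prod_pos fun i _ => hdpos i
    rw [hMdet] at hMdetle
    nlinarith [sq_nonneg ((∏ i, d i) - 1), sq_nonneg ((∏ i, d i) + 1),
      inv_pos.mpr hpd, mul_inv_cancel₀ hpd.ne']
  set sfun : Fin r → ℝ := fun i => ∑ j, Q i j with hsfun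
  have hds : ∀ i, d i ≤ sfun i := by
    intro i
    show Real.sqrt (G i i) ≤ ∑ j, Q i j
    rw [hGdiag i]
    exact hts i
  have hspos : ∀ i, 0 < sfun i := fun i => lt_of_lt_of_le (hdpos i) (hds i)
  have hprods : (1:ℝ) ≤ ∏ i, sfun i := by
    calc (1:ℝ) ≤ ∏ i, d i := hprodd
    _ ≤ ∏ i, sfun i := Finset.prod_le_prod (fun i _ => (hdpos i).le) (fun i _ => hds i)
  have hs1 : ∀ i, sfun i = 1 := by
    intro i
    exact amgm_aux Finset.univ sfun (fun i _ => hspos i) (by simpa using hsums) hprods i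
      (Finset.mem_univ i)
  have hd1 : ∀ i, d i = 1 := by
    intro i
    have hle1 : ∀ j, d j ≤ 1 := fun j => (hds j).trans (hs1 j).le
    have : ∏ j, d j ≤ d i := by
      rw [← Finset.mul_prod_erase Finset.univ d (Finset.mem_univ i)]
      have : ∏ j ∈ Finset.univ.erase i, d j ≤ 1 :=
        Finset.prod_le_one (fun j _ => (hdpos j).le) (fun j _ => hle1 j)
      nlinarith [hdpos i]
    exact le_antisymm (hle1 i) (hprodd.trans this)
  have hGtrace : G.trace = (r : ℝ) := by
    rw [trace]
    have : ∀ i, G i i = 1 := by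
      intro i; rw [← hd2 i, hd1 i]; norm_num
    simp [diag, this]
  have hEigSumG : ∑ i, hGherm.eigenvalues i = (r : ℝ) := by
    rw [← trace_eq_sum_eig hGherm, hGtrace]
  have hEigProdG : ∏ i, hGherm.eigenvalues i = 1 := by
    rw [← det_eq_prod_eig hGherm, hGdet]
  have hEigPosG : ∀ i, 0 < hGherm.eigenvalues i := by
    intro i
    rcases (hGpsd.eigenvalues_nonneg i).lt_or_eq with h | h
    · exact h
    · exfalso
      have : ∏ j, hGherm.eigenvalues j = 0 :=
        Finset.prod_eq_zero (Finset.mem_univ i) h.symm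
      rw [hEigProdG] at this; norm_num at this
  have hEigG1 : ∀ i, hGherm.eigenvalues i = 1 := by
    intro i
    exact amgm_aux Finset.univ _ (fun i _ => hEigPosG i) (by simpa using hEigSumG)
      hEigProdG.ge i (Finset.mem_univ i)
  exact eq_one_of_eig_one hGherm hEigG1

theorem stmt18 {m r n : ℕ}
    (W : Matrix (Fin m) (Fin r) ℝ) (H : Matrix (Fin r) (Fin n) ℝ)
    (hW0 : ∀ i j, 0 ≤ W i j) (hH0 : ∀ i j, 0 ≤ H i j)
    (hrank : (W * H).rank = r)
    (hcol : ∀ j, ∑ i, H i j = 1)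
    (hSSC1 : {x : Fin r → ℝ | (∀ i, 0 ≤ x i) ∧
        Real.sqrt ((r : ℝ) - 1) * Real.sqrt (∑ i, (x i) ^ 2) ≤ ∑ i, x i} ⊆ coneOf H)
    (hSSC2 : ∀ O : Matrix (Fin r) (Fin r) ℝ, O * Oᵀ = 1 → coneOf H ⊆ coneOf O →
      IsPermMatrix O)
    (Q : Matrix (Fin r) (Fin r) ℝ) (hQ : IsUnit Q.det)
    (hWQ : ∀ i j, 0 ≤ (W * Q⁻¹) i j)
    (hQH0 : ∀ i j, 0 ≤ (Q * H) i j)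
    (hQHcol : ∀ j, ∑ i, (Q * H) i j = 1)
    (hvol : ((Q * H) * (Q * H)ᵀ).det = (H * Hᵀ).det) :
    IsPermMatrix Q := by
  rcases Nat.eq_zero_or_pos r with hr0 | hrpos
  · subst hr0
    exact ⟨Equiv.refl _, fun i => i.elim0⟩
  have hr1 : (1 : ℝ) ≤ r := by exact_mod_cast hrpos
  -- full row rank of H
  have hHrank : H.rank = r := le_antisymm (by simpa using H.rank_le_card_height)
    (le_of_eq_of_le hrank.symm (Matrix.rank_mul_le_right W H))
  have hsurj : Function.Surjective H.mulVec := by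
    have htop : LinearMap.range H.mulVecLin = ⊤ := by
      apply Submodule.eq_top_of_finrank_eq
      rw [← Matrix.rank, hHrank]
      simp [Module.finrank_pi]
    intro y
    obtain ⟨c, hc⟩ := LinearMap.range_eq_top.mp htop y
    exact ⟨c, hc⟩
  have hv0 : ∀ v : Fin r → ℝ, v ᵥ* H = 0 → v = 0 := by
    intro v hv
    have h2 : v ⬝ᵥ v = 0 := by
      obtain ⟨c, hc⟩ := hsurj v
      calc v ⬝ᵥ v = v ⬝ᵥ (H *ᵥ c) := by rw [hc]
      _ = (v ᵥ* H) ⬝ᵥ c := dotProduct_mulVec v H c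
      _ = 0 := by rw [hv, zero_dotProduct]
    exact dotProduct_self_eq_zero.mp h2
  -- column sums of Q are 1
  have hQcol : ∀ j, ∑ i, Q i j = 1 := by
    have hu : (fun j => (∑ i, Q i j) - 1) ᵥ* H = 0 := by
      funext k
      have h1 : ∑ j, (∑ i, Q i j) * H j k = 1 := by
        calc ∑ j, (∑ i, Q i j) * H j k = ∑ i, ∑ j, Q i j * H j k := by
              rw [Finset.sum_comm]; simp [Finset.sum_mul]
        _ = ∑ i, (Q * H) i k := by simp [Matrix.mul_apply]
        _ = 1 := hQHcol k
      simp only [vecMul, dotProduct, Pi.zero_apply, sub_mul, one_mul,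
        Finset.sum_sub_distrib, h1, hcol k, sub_self]
    intro j
    have := congrFun (hv0 _ hu) j
    simpa [sub_eq_zero] using this
  -- det(HHᵀ) ≠ 0 and det Q ^ 2 = 1
  have hHH : (H * Hᵀ).det ≠ 0 := by
    intro h0
    obtain ⟨v, hvne, hv⟩ := Matrix.exists_mulVec_eq_zero_iff.mpr h0
    apply hvne
    apply hv0
    have h2 : (v ᵥ* H) ⬝ᵥ (v ᵥ* H) = 0 := by
      have : v ⬝ᵥ ((H * Hᵀ) *ᵥ v) = 0 := by rw [hv, dotProduct_zero]
      rwa [← Matrix.mulVec_mulVec, dotProduct_mulVec, Matrix.mulVec_transpose] at this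
    exact dotProduct_self_eq_zero.mp h2
  have hdet2 : Q.det ^ 2 = 1 := by
    have hexp : ((Q * H) * (Q * H)ᵀ).det = Q.det ^ 2 * (H * Hᵀ).det := by
      rw [Matrix.transpose_mul, show Q * H * (Hᵀ * Qᵀ) = Q * (H * Hᵀ) * Qᵀ by
        rw [Matrix.mul_assoc, ← Matrix.mul_assoc H Hᵀ Qᵀ, ← Matrix.mul_assoc],
        Matrix.det_mul, Matrix.det_mul, Matrix.det_transpose]
      ring
    rw [hexp] at hvol
    nth_rewrite 2 [← one_mul ((H * Hᵀ).det)] at hvol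
    exact mul_right_cancel₀ hHH hvol
  -- dual cone step: row norms bounded by row sums
  have hts : ∀ i, Real.sqrt (∑ j, (Q i j) ^ 2) ≤ ∑ j, Q i j := by
    intro i
    set q : Fin r → ℝ := fun j => Q i j with hq
    set t : ℝ := Real.sqrt (∑ j, q j ^ 2) with ht
    have ht0 : 0 ≤ t := Real.sqrt_nonneg _
    have ht2 : t ^ 2 = ∑ j, q j ^ 2 := Real.sq_sqrt (Finset.sum_nonneg fun j _ => sq_nonneg _)
    have habs : ∀ j, |q j| ≤ t := by
      intro j
      rw [← Real.sqrt_sq_eq_abs]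
      exact Real.sqrt_le_sqrt
        (Finset.single_le_sum (fun k _ => sq_nonneg (q k)) (Finset.mem_univ j))
    set s : ℝ := ∑ j, q j with hs
    have hsle : s ≤ r * t := by
      calc s ≤ ∑ j, |q j| := Finset.sum_le_sum fun j _ => le_abs_self _
      _ ≤ ∑ _j : Fin r, t := Finset.sum_le_sum fun j _ => habs j
      _ = r * t := by simp [mul_comm]
    set x : Fin r → ℝ := fun j => t - q j with hx
    have hxmem : x ∈ {x : Fin r → ℝ | (∀ i, 0 ≤ x i) ∧
        Real.sqrt ((r : ℝ) - 1) * Real.sqrt (∑ i, (x i) ^ 2) ≤ ∑ i, x i} := by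
      constructor
      · intro j
        have := habs j
        have := le_abs_self (q j)
        simp only [hx]
        linarith
      · have hsx : ∑ j, x j = r * t - s := by
          simp [hx, Finset.sum_sub_distrib, mul_comm, hs]
        have hsx2 : ∑ j, (x j) ^ 2 = r * t ^ 2 - 2 * t * s + t ^ 2 := by
          have : ∀ j, (x j) ^ 2 = t ^ 2 - 2 * t * q j + q j ^ 2 := by
            intro j; simp [hx]; ring
          rw [Finset.sum_congr rfl (fun j _ => this j)]
          simp [Finset.sum_add_distrib, Finset.sum_sub_distrib, ← Finset.mul_sum, ← hs, ← ht2]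
        rw [hsx, hsx2, ← Real.sqrt_mul (by linarith : (0:ℝ) ≤ (r:ℝ) - 1)]
        have hgoal : ((r:ℝ) - 1) * (r * t ^ 2 - 2 * t * s + t ^ 2) ≤ (r * t - s) ^ 2 := by
          nlinarith [sq_nonneg (t - s)]
        calc Real.sqrt (((r:ℝ) - 1) * (r * t ^ 2 - 2 * t * s + t ^ 2))
            ≤ Real.sqrt ((r * t - s) ^ 2) := Real.sqrt_le_sqrt hgoal
        _ = |r * t - s| := Real.sqrt_sq_eq_abs _
        _ = r * t - s := abs_of_nonneg (by linarith)
    obtain ⟨c, hc0, hcx⟩ := hSSC1 hxmem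
    have hqx : 0 ≤ q ⬝ᵥ x := by
      rw [hcx, dotProduct_mulVec]
      have hqH : ∀ k, (q ᵥ* H) k = (Q * H) i k := by
        intro k; simp [vecMul, dotProduct, Matrix.mul_apply, hq]
      apply Finset.sum_nonneg
      intro k _
      exact mul_nonneg (by rw [hqH k]; exact hQH0 i k) (hc0 k)
    have hqx2 : q ⬝ᵥ x = t * s - t ^ 2 := by
      simp only [dotProduct, hx, mul_sub, Finset.sum_sub_distrib, ← Finset.sum_mul, ← hs, ← ht2]
      rw [ht2]
      ring_nf
    rw [hqx2] at hqx
    show t ≤ s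
    rcases eq_or_lt_of_le ht0 with h0 | h0
    · have hs0 : s = 0 := by
        rw [hs]
        exact Finset.sum_eq_zero fun j _ => abs_nonpos_iff.mp (h0 ▸ habs j)
      linarith
    · nlinarith
  -- total sum is r
  have hsums : ∑ i, ∑ j, Q i j = (r : ℝ) := by
    rw [show ∑ i, ∑ j, Q i j = ∑ j, ∑ i, Q i j from Finset.sum_comm]
    simp [hQcol]
  -- Q is orthogonal
  have hG1 : Q * Qᵀ = 1 := orth_of_rows Q hdet2 hts hsums
  have hQtQ : Qᵀ * Q = 1 := mul_eq_one_comm.mp hG1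
  have hOorth : Qᵀ * Qᵀᵀ = 1 := by rw [transpose_transpose]; exact hQtQ
  have hcone : coneOf H ⊆ coneOf Qᵀ := by
    rintro y ⟨c, hc0, rfl⟩
    refine ⟨(Q * H) *ᵥ c, ?_, ?_⟩
    · intro j
      rw [Matrix.mulVec, dotProduct]
      exact Finset.sum_nonneg fun k _ => mul_nonneg (hQH0 j k) (hc0 k)
    · rw [Matrix.mulVec_mulVec, ← Matrix.mul_assoc, hQtQ, Matrix.one_mul]
  obtain ⟨σ, hσ⟩ := hSSC2 Qᵀ hOorth hcone
  refine ⟨σ⁻¹, fun i j => ?_⟩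
  have h := hσ j i
  rw [transpose_apply] at h
  rw [h]
  have hiff : (σ⁻¹ j = i) ↔ (σ i = j) := by
    constructor
    · intro h'; rw [← h']; simp
    · intro h'; rw [← h']; simp
  simp only [hiff]
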